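/- (Join of spheres) If G is a p-sphere and H is a q-sphere (as finite abstract simplicial complexes), then the join G + H is a (p+q+1)-sphere. -/

import Mathlib

open Finset

variable {α : Type*} [DecidableEq α]

/-- The star `U(x) = {y ∈ G : x ⊆ y}` of a simplex `x` in the complex `G`. -/
def starC (G : Finset (Finset α)) (x : Finset α) : Finset (Finset α) :=
  G.filter (fun y => x ⊆ y)

/-- The unit ball `B(x)`: the closure of the star `U(x)`. -/
def ballC (G : Finset (Finset α)) (x : Finset α) : Finset (Finset α) :=
  G.filter (fun z => ∃ y ∈ G, x ⊆ y ∧ z ⊆ y)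

/-- The unit sphere `S(x) = B(x) \ U(x)`. -/
def sphereC (G : Finset (Finset α)) (x : Finset α) : Finset (Finset α) :=
  ballC G x \ starC G x

/-- `G` is a finite abstract simplicial complex: a finite set of nonempty finite sets
closed under taking nonempty subsets. -/
def IsComplex (G : Finset (Finset α)) : Prop :=
  (∀ x ∈ G, x.Nonempty) ∧ ∀ x ∈ G, ∀ y, y ⊆ x → y.Nonempty → y ∈ G

/-- The intersection `x_1 ∩ ... ∩ x_m` of a tuple of finite sets (for `m ≥ 1`). -/
def interTuple {m : ℕ} (X : Fin m → Finset α) : Finset α :=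
  (Finset.univ.sup X).filter (fun v => ∀ j, v ∈ X j)

/-- The `m`-th characteristic `w_m(A)`. -/
def wm (m : ℕ) (A : Finset (Finset α)) : ℤ :=
  ∑ X ∈ Fintype.piFinset (fun _ : Fin m => A),
    if interTuple X ∈ A then ∏ j, (-1 : ℤ) ^ ((X j).card - 1) else 0

/-- `U` is open in the star topology on `G`: a union of stars. -/
def SCOpen (G U : Finset (Finset α)) : Prop :=
  ∃ T ⊆ G, U = T.biUnion (fun x => starC G x)

/-- Contractibility, defined recursively: a one-point complex is contractible, and
`G` is contractible if there is a vertex `x ∈ G` such that the unit sphere `S(x)`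
and `G` minus the star `U(x)` are both contractible. -/
inductive Contractible : Finset (Finset ℕ) → Prop where
  | point (v : ℕ) : Contractible {{v}}
  | step (G : Finset (Finset ℕ)) (x : Finset ℕ) (hx : x ∈ G) (hv : x.card = 1)
      (hS : Contractible (sphereC G x)) (hU : Contractible (G \ starC G x)) :
      Contractible G

/-- `d`-spheres, defined recursively: the empty complex is the `(-1)`-sphere; a
nonempty complex `G` is a `d`-sphere if every vertex unit sphere is a
`(d-1)`-sphere (so `G` is a `d`-manifold) and removing some open star leaves a
contractible complex. -/
inductive IsSphere : ℤ → Finset (Finset ℕ) → Prop where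
  | empty : IsSphere (-1) (∅ : Finset (Finset ℕ))
  | succ (d : ℤ) (G : Finset (Finset ℕ)) (hne : G.Nonempty)
      (hmani : ∀ x ∈ G, x.card = 1 → IsSphere (d - 1) (sphereC G x))
      (hcon : ∃ x ∈ G, x.card = 1 ∧ Contractible (G \ starC G x)) :
      IsSphere d G

/-- The join of two complexes: `G + H = G ∪ H ∪ {x ∪ y : x ∈ G, y ∈ H}`. -/
def joinC (G H : Finset (Finset ℕ)) : Finset (Finset ℕ) :=
  G ∪ H ∪ (G ×ˢ H).image (fun p => p.1 ∪ p.2)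

section JoinLemmas

lemma mem_joinC {G H : Finset (Finset ℕ)} {z : Finset ℕ} :
    z ∈ joinC G H ↔ z ∈ G ∨ z ∈ H ∨ ∃ a ∈ G, ∃ b ∈ H, a ∪ b = z := by
  simp [joinC, Finset.mem_union, Finset.mem_image, Finset.mem_product, or_assoc]
  tauto

lemma subset_sup_of_mem {G : Finset (Finset ℕ)} {z : Finset ℕ} (h : z ∈ G) :
    z ⊆ G.sup id := Finset.le_sup (f := id) h

lemma joinC_empty (G : Finset (Finset ℕ)) : joinC G ∅ = G := by
  simp [joinC]

lemma empty_joinC (H : Finset (Finset ℕ)) : joinC ∅ H = H := by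
  simp [joinC]

lemma joinC_comm (G H : Finset (Finset ℕ)) : joinC G H = joinC H G := by
  ext z
  simp only [mem_joinC]
  constructor
  · rintro (h | h | ⟨a, ha, b, hb, rfl⟩)
    · exact Or.inr (Or.inl h)
    · exact Or.inl h
    · exact Or.inr (Or.inr ⟨b, hb, a, ha, Finset.union_comm b a⟩)
  · rintro (h | h | ⟨a, ha, b, hb, rfl⟩)
    · exact Or.inr (Or.inl h)
    · exact Or.inl h
    · exact Or.inr (Or.inr ⟨b, hb, a, ha, Finset.union_comm b a⟩)

lemma sphereC_subset (G : Finset (Finset ℕ)) (x : Finset ℕ) : sphereC G x ⊆ G := by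
  intro z hz
  have h2 := Finset.sdiff_subset hz
  simp only [ballC, Finset.mem_filter] at h2
  exact h2.1

lemma mem_sphereC {G : Finset (Finset ℕ)} {x z : Finset ℕ} :
    z ∈ sphereC G x ↔ (z ∈ G ∧ ∃ y ∈ G, x ⊆ y ∧ z ⊆ y) ∧ ¬ x ⊆ z := by
  simp only [sphereC, ballC, starC, Finset.mem_sdiff, Finset.mem_filter]
  tauto

lemma mem_sdiff_starC {G : Finset (Finset ℕ)} {x z : Finset ℕ} :
    z ∈ G \ starC G x ↔ z ∈ G ∧ ¬ x ⊆ z := by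
  simp only [starC, Finset.mem_sdiff, Finset.mem_filter]
  tauto

end JoinLemmas
lemma Contractible.empty_not_mem {C : Finset (Finset ℕ)} (h : Contractible C) : ∅ ∉ C := by
  induction h with
  | point v =>
    simp only [Finset.mem_singleton]
    exact fun h => by simpa using congrArg Finset.card h
  | step G x hx hv hS hU ihS ihU =>
    intro h0
    apply ihU
    rw [mem_sdiff_starC]
    refine ⟨h0, fun hc => ?_⟩
    have : x = ∅ := Finset.subset_empty.1 hc
    simp [this] at hv

lemma IsSphere.empty_not_mem {d : ℤ} {G : Finset (Finset ℕ)} (h : IsSphere d G) : ∅ ∉ G := by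
  induction h with
  | empty => simp
  | succ d G hne hmani hcon ih =>
    intro h0
    obtain ⟨x, hx, hx1, -⟩ := hcon
    apply ih x hx hx1
    rw [mem_sphereC]
    refine ⟨⟨h0, x, hx, subset_rfl, Finset.empty_subset x⟩, fun hc => ?_⟩
    have : x = ∅ := Finset.subset_empty.1 hc
    simp [this] at hx1
section Key

variable {G H : Finset (Finset ℕ)} {x : Finset ℕ}

lemma not_subset_H {z : Finset ℕ} (hGH : Disjoint (G.sup id) (H.sup id))
    (hxG : x ⊆ G.sup id) (hxne : x.Nonempty) (hzH : z ⊆ H.sup id) : ¬ x ⊆ z := by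
  intro hc
  obtain ⟨v, hv⟩ := hxne
  exact Finset.disjoint_left.1 hGH (hxG hv) (hzH (hc hv))

lemma star_join (hx : x ∈ G) (hxne : x.Nonempty)
    (hGH : Disjoint (G.sup id) (H.sup id)) :
    joinC G H \ starC (joinC G H) x = joinC (G \ starC G x) H := by
  have hxG : x ⊆ G.sup id := subset_sup_of_mem hx
  ext z
  rw [mem_sdiff_starC, mem_joinC, mem_joinC]
  constructor
  · rintro ⟨(hz | hz | ⟨a, ha, b, hb, rfl⟩), hnx⟩
    · exact Or.inl (mem_sdiff_starC.2 ⟨hz, hnx⟩)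
    · exact Or.inr (Or.inl hz)
    · exact Or.inr (Or.inr ⟨a, mem_sdiff_starC.2
        ⟨ha, fun hc => hnx (hc.trans Finset.subset_union_left)⟩, b, hb, rfl⟩)
  · rintro (hz | hz | ⟨a, ha, b, hb, rfl⟩)
    · rw [mem_sdiff_starC] at hz
      exact ⟨Or.inl hz.1, hz.2⟩
    · exact ⟨Or.inr (Or.inl hz), not_subset_H hGH hxG hxne (subset_sup_of_mem hz)⟩
    · rw [mem_sdiff_starC] at ha
      refine ⟨Or.inr (Or.inr ⟨a, ha.1, b, hb, rfl⟩), fun hc => ?_⟩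
      have hd : Disjoint x b := hGH.mono hxG (subset_sup_of_mem hb)
      exact ha.2 (hd.left_le_of_le_sup_right hc)

lemma sphere_join (hx : x ∈ G) (hxne : x.Nonempty)
    (hGH : Disjoint (G.sup id) (H.sup id)) :
    sphereC (joinC G H) x = joinC (sphereC G x) H := by
  have hxG : x ⊆ G.sup id := subset_sup_of_mem hx
  ext z
  simp only [mem_sphereC, mem_joinC]
  constructor
  · rintro ⟨⟨hzJ, y, hyJ, hxy, hzy⟩, hnx⟩
    -- analyze the witness y
    have hwit : ∀ a : Finset ℕ, a ⊆ G.sup id → a ⊆ y → ∃ y1 ∈ G, x ⊆ y1 ∧ a ⊆ y1 := by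
      intro a haG hay
      rcases hyJ with hy | hy | ⟨y1, hy1, y2, hy2, rfl⟩
      · exact ⟨y, hy, hxy, hay⟩
      · exact absurd hxy (not_subset_H hGH hxG hxne (subset_sup_of_mem hy))
      · have hdy2 : y2 ⊆ H.sup id := subset_sup_of_mem hy2
        refine ⟨y1, hy1, ?_, ?_⟩
        · exact (hGH.mono hxG hdy2).left_le_of_le_sup_right hxy
        · exact (hGH.mono haG hdy2).left_le_of_le_sup_right hay
    rcases hzJ with hz | hz | ⟨a, ha, b, hb, rfl⟩
    · obtain ⟨y1, hy1, hxy1, hzy1⟩ := hwit z (subset_sup_of_mem hz) hzy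
      exact Or.inl ⟨⟨hz, y1, hy1, hxy1, hzy1⟩, hnx⟩
    · exact Or.inr (Or.inl hz)
    · obtain ⟨y1, hy1, hxy1, hay1⟩ := hwit a (subset_sup_of_mem ha)
        (Finset.subset_union_left.trans hzy)
      exact Or.inr (Or.inr ⟨a, ⟨⟨ha, y1, hy1, hxy1, hay1⟩,
        fun hc => hnx (hc.trans Finset.subset_union_left)⟩, b, hb, rfl⟩)
  · rintro (hz | hz | ⟨a, ha, b, hb, rfl⟩)
    · obtain ⟨⟨hzG, y, hy, hxy, hzy⟩, hnx⟩ := hz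
      exact ⟨⟨Or.inl hzG, y, Or.inl hy, hxy, hzy⟩, hnx⟩
    · refine ⟨⟨Or.inr (Or.inl hz), x ∪ z,
        Or.inr (Or.inr ⟨x, hx, z, hz, rfl⟩),
        Finset.subset_union_left, Finset.subset_union_right⟩,
        not_subset_H hGH hxG hxne (subset_sup_of_mem hz)⟩
    · obtain ⟨⟨haG, y, hy, hxy, hay⟩, hnxa⟩ := ha
      refine ⟨⟨Or.inr (Or.inr ⟨a, haG, b, hb, rfl⟩), y ∪ b,
        Or.inr (Or.inr ⟨y, hy, b, hb, rfl⟩),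
        hxy.trans Finset.subset_union_left, Finset.union_subset_union_left hay⟩,
        fun hc => ?_⟩
      have hd : Disjoint x b := hGH.mono hxG (subset_sup_of_mem hb)
      exact hnxa (hd.left_le_of_le_sup_right hc)

end Key
lemma contractible_point_point {v w : ℕ} (hvw : v ≠ w) :
    Contractible (joinC {{v}} {{w}}) := by
  have hJ : joinC {{v}} {{w}} = {{v}, {w}, {v, w}} := by
    ext z
    have huv : ({v} : Finset ℕ) ∪ {w} = {v, w} := (Finset.insert_eq v {w}).symm
    simp only [mem_joinC, Finset.mem_insert, Finset.mem_singleton, Finset.mem_singleton,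
      exists_eq_left, huv, eq_comm]
  rw [hJ]
  have hmemv : ({v} : Finset ℕ) ∈ ({{v}, {w}, {v, w}} : Finset (Finset ℕ)) := by simp
  have hstar : starC ({{v}, {w}, {v, w}} : Finset (Finset ℕ)) {v} = {{v}, {v, w}} := by
    ext z
    simp only [starC, Finset.mem_filter, Finset.mem_insert, Finset.mem_singleton,
      Finset.singleton_subset_iff]
    constructor
    · rintro ⟨(rfl | rfl | rfl), hv⟩
      · exact Or.inl rfl
      · exact absurd (Finset.mem_singleton.1 hv) hvw
      · exact Or.inr rfl
    · rintro (rfl | rfl) <;> simp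
  have hball : ballC ({{v}, {w}, {v, w}} : Finset (Finset ℕ)) {v} = {{v}, {w}, {v, w}} := by
    ext z
    simp only [ballC, Finset.mem_filter, Finset.mem_insert, Finset.mem_singleton]
    constructor
    · exact fun h => h.1
    · intro h
      refine ⟨h, {v, w}, ?_, ?_, ?_⟩
      · simp
      · simp
      · rcases h with rfl | rfl | rfl <;> simp [Finset.insert_subset_iff]
  have hsph : sphereC ({{v}, {w}, {v, w}} : Finset (Finset ℕ)) {v} = {{w}} := by
    rw [sphereC, hball, hstar]
    ext z
    simp only [Finset.mem_sdiff, Finset.mem_insert, Finset.mem_singleton]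
    constructor
    · rintro ⟨rfl | rfl | rfl, h2⟩
      · exact absurd (Or.inl rfl) h2
      · rfl
      · exact absurd (Or.inr rfl) h2
    · rintro rfl
      refine ⟨Or.inr (Or.inl rfl), ?_⟩
      rintro (h | h)
      · exact hvw (Finset.singleton_injective h).symm
      · have : v ∈ ({w} : Finset ℕ) := h ▸ (by simp : v ∈ ({v, w} : Finset ℕ))
        exact hvw (Finset.mem_singleton.1 this)
  have hrem : ({{v}, {w}, {v, w}} : Finset (Finset ℕ)) \ starC ({{v}, {w}, {v, w}} : Finset (Finset ℕ)) {v} = {{w}} := by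
    rw [hstar]
    ext z
    simp only [Finset.mem_sdiff, Finset.mem_insert, Finset.mem_singleton]
    constructor
    · rintro ⟨rfl | rfl | rfl, h2⟩
      · exact absurd (Or.inl rfl) h2
      · rfl
      · exact absurd (Or.inr rfl) h2
    · rintro rfl
      refine ⟨Or.inr (Or.inl rfl), ?_⟩
      rintro (h | h)
      · exact hvw (Finset.singleton_injective h).symm
      · have : v ∈ ({w} : Finset ℕ) := h ▸ (by simp : v ∈ ({v, w} : Finset ℕ))
        exact hvw (Finset.mem_singleton.1 this)
  exact Contractible.step _ {v} hmemv (by simp) (hsph ▸ Contractible.point w)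
    (hrem ▸ Contractible.point w)
lemma vertex_nonempty {x : Finset ℕ} (h : x.card = 1) : x.Nonempty :=
  Finset.card_pos.1 (by omega)

lemma join_cc {G : Finset (Finset ℕ)} (hG : Contractible G) :
    ∀ {H : Finset (Finset ℕ)}, Contractible H →
      Disjoint (G.sup id) (H.sup id) → Contractible (joinC G H) := by
  induction hG with
  | point v =>
    intro H hH
    induction hH with
    | point w =>
      intro hd
      exact contractible_point_point (by simpa using hd)
    | step H x hx hv hS hU ihS ihU =>
      intro hd
      have hxne : x.Nonempty := vertex_nonempty hv
      apply Contractible.step _ x (mem_joinC.2 (Or.inr (Or.inl hx))) hv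
      · rw [joinC_comm, sphere_join hx hxne hd.symm, joinC_comm]
        exact ihS (hd.mono_right (Finset.sup_mono (sphereC_subset H x)))
      · rw [joinC_comm, star_join hx hxne hd.symm, joinC_comm]
        exact ihU (hd.mono_right (Finset.sup_mono Finset.sdiff_subset))
  | step G x hx hv hS hU ihS ihU =>
    intro H hH hd
    have hxne : x.Nonempty := vertex_nonempty hv
    apply Contractible.step _ x (mem_joinC.2 (Or.inl hx)) hv
    · rw [sphere_join hx hxne hd]
      exact ihS hH (hd.mono_left (Finset.sup_mono (sphereC_subset G x)))
    · rw [star_join hx hxne hd]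
      exact ihU hH (hd.mono_left (Finset.sup_mono Finset.sdiff_subset))

lemma join_cs {G : Finset (Finset ℕ)} (hG : Contractible G) :
    ∀ {q : ℤ} {H : Finset (Finset ℕ)}, IsSphere q H →
      Disjoint (G.sup id) (H.sup id) → Contractible (joinC G H) := by
  induction hG with
  | point v =>
    intro q H hH
    induction hH with
    | empty =>
      intro _
      rw [joinC_empty]
      exact Contractible.point v
    | succ d H hne hmani hcon ih =>
      intro hd
      obtain ⟨x, hx, hx1, hU⟩ := hcon
      have hxne : x.Nonempty := vertex_nonempty hx1
      apply Contractible.step _ x (mem_joinC.2 (Or.inr (Or.inl hx))) hx1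
      · rw [joinC_comm, sphere_join hx hxne hd.symm, joinC_comm]
        exact ih x hx hx1 (hd.mono_right (Finset.sup_mono (sphereC_subset H x)))
      · rw [joinC_comm, star_join hx hxne hd.symm, joinC_comm]
        exact join_cc (Contractible.point v) hU
          (hd.mono_right (Finset.sup_mono Finset.sdiff_subset))
  | step G x hx hv hS hU ihS ihU =>
    intro q H hH hd
    have hxne : x.Nonempty := vertex_nonempty hv
    apply Contractible.step _ x (mem_joinC.2 (Or.inl hx)) hv
    · rw [sphere_join hx hxne hd]
      exact ihS hH (hd.mono_left (Finset.sup_mono (sphereC_subset G x)))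
    · rw [star_join hx hxne hd]
      exact ihU hH (hd.mono_left (Finset.sup_mono Finset.sdiff_subset))
lemma vertex_of_join {G H : Finset (Finset ℕ)} {x : Finset ℕ}
    (hGH : Disjoint (G.sup id) (H.sup id)) (h0G : ∅ ∉ G) (h0H : ∅ ∉ H)
    (hx : x ∈ joinC G H) (hx1 : x.card = 1) : x ∈ G ∨ x ∈ H := by
  rcases mem_joinC.1 hx with h | h | ⟨a, ha, b, hb, rfl⟩
  · exact Or.inl h
  · exact Or.inr h
  · exfalso
    have hane : a.Nonempty := Finset.nonempty_iff_ne_empty.2 (fun h => h0G (h ▸ ha))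
    have hbne : b.Nonempty := Finset.nonempty_iff_ne_empty.2 (fun h => h0H (h ▸ hb))
    have hdis : Disjoint a b := hGH.mono (subset_sup_of_mem ha) (subset_sup_of_mem hb)
    have hcard := Finset.card_union_of_disjoint hdis
    have ha1 : 1 ≤ a.card := Finset.card_pos.2 hane
    have hb1 : 1 ≤ b.card := Finset.card_pos.2 hbne
    omega

/-- The join of a `p`-sphere and a `q`-sphere (with disjoint vertex sets) is a
`(p+q+1)`-sphere. -/
theorem join_of_spheres (G H : Finset (Finset ℕ))
    (hGH : Disjoint (G.sup id) (H.sup id))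
    (p q : ℤ) (hG : IsSphere p G) (hH : IsSphere q H) :
    IsSphere (p + q + 1) (joinC G H) := by
  induction hG generalizing H q hH with
  | empty =>
    rw [empty_joinC]
    have harith : (-1 : ℤ) + q + 1 = q := by ring
    rw [harith]
    exact hH
  | succ p G hne hmani hcon ihmani =>
    have hGsph : IsSphere p G := IsSphere.succ p G hne hmani hcon
    have h0G : ∅ ∉ G := hGsph.empty_not_mem
    induction hH with
    | empty =>
      rw [joinC_empty]
      have harith : p + (-1 : ℤ) + 1 = p := by ring
      rw [harith]
      exact hGsph
    | succ q H hneH hmaniH hconH ihH =>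
      have hHsph : IsSphere q H := IsSphere.succ q H hneH hmaniH hconH
      have h0H : ∅ ∉ H := hHsph.empty_not_mem
      apply IsSphere.succ
      · obtain ⟨g, hg⟩ := hne
        exact ⟨g, mem_joinC.2 (Or.inl hg)⟩
      · intro x hxJ hx1
        have hxne : x.Nonempty := vertex_nonempty hx1
        rcases vertex_of_join hGH h0G h0H hxJ hx1 with hxG | hxH
        · rw [sphere_join hxG hxne hGH]
          have harith : p + q + 1 - 1 = p - 1 + q + 1 := by ring
          rw [harith]
          exact ihmani x hxG hx1 H
            (hGH.mono_left (Finset.sup_mono (sphereC_subset G x))) q hHsph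
        · rw [joinC_comm, sphere_join hxH hxne hGH.symm, joinC_comm]
          have harith : p + q + 1 - 1 = p + (q - 1) + 1 := by ring
          rw [harith]
          exact ihH x hxH hx1 (hGH.mono_right (Finset.sup_mono (sphereC_subset H x)))
      · obtain ⟨x, hxG, hx1, hU⟩ := hcon
        refine ⟨x, mem_joinC.2 (Or.inl hxG), hx1, ?_⟩
        rw [star_join hxG (vertex_nonempty hx1) hGH]
        exact join_cs hU hHsph (hGH.mono_left (Finset.sup_mono Finset.sdiff_subset))
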